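/- (Gap analysis, Case 3: R12 ≥ R21, R13 ≤ R31, R23 ≥ R32; cyclic strategy for the cycle 1→2→3→1 needed.) Suppose the nonnegative rate tuple lies in C̲'_g and additionally R12 ≥ R21, R13 ≤ R31, R23 ≥ R32. Let R123^c = min(R12−R21, R23−R32, R31−R13). Define α32^b = (2^{2R32+1}−1)/(2h3²P), α31^b = 2^{2R32+1}(2^{2R13+1}−1)/(2h3²P), α31^c = 2^{2R32+2R13+2}(2^{2R123^c+1}−1)/(2h3²P), α31^u = 2^{2R123^c+2R32+2R13+3}(2^{2(R31−R13−R123^c)}−1)/(h3²P), α21^b = 2^{2R31+2R32+3}(2^{2R21+1}−1)/(2h2²P), α23^c = 2^{2R21+2R31+2R32+4}(2^{2R123^c+1}−1)/(2h2²P), α23^u = 2^{2R21+2R31+2R123^c+2R32+5}(2^{2(R23−R32−R123^c)}−1)/(h2²P), α12^u = 2^{2R23+2R21+2R31+5}(2^{2(R12−R21−R123^c)}−1)/(h1²P), with α23^b = (h3²/h2²)α32^b, α13^b = (h3²/h1²)α31^b, α12^b = (h2²/h1²)α21^b, ᾶ23^c = (h3²/h2²)α31^c, α12^c = (h2²/h1²)α23^c.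 Then α32^b+α31^b+α31^c+α31^u ≤ 1, α23^b+ᾶ23^c+α21^b+α23^c+α23^u ≤ 1, α13^b+α12^b+α12^c+α12^u ≤ 1, and (2^{2(R23+R13)}−1)/(h3²P) + 2^{2(R13+R23)}(2^{2R12}−1)/(h2²P) + 2^{2(R13+R23+R12)}(2^{2(R31−R13−R123^c)}−1)/(h1²P) ≤ 1. -/

import Mathlib

noncomputable def Cg (x : ℝ) : ℝ := (1 / 2) * Real.logb 2 (1 + x)

private lemma key_log (x r c : ℝ) (hx : 0 < 1 + x) (h : r ≤ Cg x - c) :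
    (2:ℝ) ^ (2*r + 2*c) ≤ 1 + x := by
  have h2 : 2*r + 2*c ≤ Real.logb 2 (1+x) := by unfold Cg at h; linarith
  calc (2:ℝ)^(2*r+2*c) ≤ (2:ℝ)^(Real.logb 2 (1+x)) :=
        Real.rpow_le_rpow_of_exponent_le one_le_two h2
    _ = 1 + x := Real.rpow_logb two_pos (by norm_num) hx

private lemma abs_sq_le (h2 h3 : ℝ) (h : h3 ^ 2 ≤ h2 ^ 2) : (|h2| + |h3|) ^ 2 ≤ 4 * h2 ^ 2 := by
  have h32 : |h3| ≤ |h2| := by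
    rw [← Real.sqrt_sq_eq_abs, ← Real.sqrt_sq_eq_abs]; exact Real.sqrt_le_sqrt h
  nlinarith [abs_nonneg h3, sq_abs h2, sq_abs h3]

private lemma one_le_two_rpow {x : ℝ} (hx : 0 ≤ x) : (1:ℝ) ≤ (2:ℝ)^x := by
  calc (1:ℝ) = (2:ℝ)^(0:ℝ) := (Real.rpow_zero 2).symm
  _ ≤ _ := Real.rpow_le_rpow_of_exponent_le one_le_two hx

set_option maxHeartbeats 2000000 in
theorem stmt_13
    (P h1 h2 h3 : ℝ) (hP : 0 < P)
    (hh12 : h2 ^ 2 ≤ h1 ^ 2) (hh23 : h3 ^ 2 ≤ h2 ^ 2) (hh3 : 0 < h3 ^ 2)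
    (R12 R13 R21 R23 R31 R32 : ℝ)
    (hr12 : 0 ≤ R12) (hr13 : 0 ≤ R13) (hr21 : 0 ≤ R21)
    (hr23 : 0 ≤ R23) (hr31 : 0 ≤ R31) (hr32 : 0 ≤ R32)
    (hG1 : R31 + R32 ≤ Cg (h3 ^ 2 * P) - 2)
    (hG2 : R13 + R23 ≤ Cg (h3 ^ 2 * P) - 2)
    (hG3 : R12 + R13 + R32 ≤ Cg (h2 ^ 2 * P + h3 ^ 2 * P) - 3)
    (hG4 : R13 + R23 + R12 ≤ Cg (h2 ^ 2 * P + h3 ^ 2 * P) - 3)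
    (hG5 : R12 + R31 + R32 ≤ Cg (h1 ^ 2 * P + h2 ^ 2 * P) - 3)
    (hG6 : R13 + R23 + R21 ≤ Cg (h1 ^ 2 * P + h3 ^ 2 * P) - 3)
    (hG7 : R21 + R31 + R23 ≤ Cg ((|h2| + |h3|) ^ 2 * P) - 7 / 2)
    (hG8 : R21 + R31 + R32 ≤ Cg ((|h2| + |h3|) ^ 2 * P) - 7 / 2)
    (hc1 : R21 ≤ R12) (hc2 : R13 ≤ R31) (hc3 : R32 ≤ R23)
    (R123c : ℝ)
    (hR123c : R123c = min (R12 - R21) (min (R23 - R32) (R31 - R13)))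
    (a32b a31b a31c a31u a21b a23c a23u a12u a23b a13b a12b at23c a12c : ℝ)
    (ha32b : a32b = ((2:ℝ) ^ (2 * R32 + 1) - 1) / (2 * h3 ^ 2 * P))
    (ha31b : a31b = (2:ℝ) ^ (2 * R32 + 1) * ((2:ℝ) ^ (2 * R13 + 1) - 1) / (2 * h3 ^ 2 * P))
    (ha31c : a31c = (2:ℝ) ^ (2 * R32 + 2 * R13 + 2) * ((2:ℝ) ^ (2 * R123c + 1) - 1) / (2 * h3 ^ 2 * P))
    (ha31u : a31u = (2:ℝ) ^ (2 * R123c + 2 * R32 + 2 * R13 + 3) * ((2:ℝ) ^ (2 * (R31 - R13 - R123c)) - 1) / (h3 ^ 2 * P))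
    (ha21b : a21b = (2:ℝ) ^ (2 * R31 + 2 * R32 + 3) * ((2:ℝ) ^ (2 * R21 + 1) - 1) / (2 * h2 ^ 2 * P))
    (ha23c : a23c = (2:ℝ) ^ (2 * R21 + 2 * R31 + 2 * R32 + 4) * ((2:ℝ) ^ (2 * R123c + 1) - 1) / (2 * h2 ^ 2 * P))
    (ha23u : a23u = (2:ℝ) ^ (2 * R21 + 2 * R31 + 2 * R123c + 2 * R32 + 5) * ((2:ℝ) ^ (2 * (R23 - R32 - R123c)) - 1) / (h2 ^ 2 * P))
    (ha12u : a12u = (2:ℝ) ^ (2 * R23 + 2 * R21 + 2 * R31 + 5) * ((2:ℝ) ^ (2 * (R12 - R21 - R123c)) - 1) / (h1 ^ 2 * P))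
    (ha23b : a23b = h3 ^ 2 / h2 ^ 2 * a32b)
    (ha13b : a13b = h3 ^ 2 / h1 ^ 2 * a31b)
    (ha12b : a12b = h2 ^ 2 / h1 ^ 2 * a21b)
    (hat23c : at23c = h3 ^ 2 / h2 ^ 2 * a31c)
    (ha12c : a12c = h2 ^ 2 / h1 ^ 2 * a23c) :
    a32b + a31b + a31c + a31u ≤ 1 ∧
    a23b + at23c + a21b + a23c + a23u ≤ 1 ∧
    a13b + a12b + a12c + a12u ≤ 1 ∧
    ((2:ℝ) ^ (2 * (R23 + R13)) - 1) / (h3 ^ 2 * P)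
      + (2:ℝ) ^ (2 * (R13 + R23)) * ((2:ℝ) ^ (2 * R12) - 1) / (h2 ^ 2 * P)
      + (2:ℝ) ^ (2 * (R13 + R23 + R12)) * ((2:ℝ) ^ (2 * (R31 - R13 - R123c)) - 1) / (h1 ^ 2 * P) ≤ 1 := by
  have hsplit : ∀ x y : ℝ, (2:ℝ)^(x+y) = (2:ℝ)^x * (2:ℝ)^y := fun x y => Real.rpow_add two_pos x y
  have hh2 : 0 < h2 ^ 2 := lt_of_lt_of_le hh3 hh23
  have hh1 : 0 < h1 ^ 2 := lt_of_lt_of_le hh2 hh12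
  have ht3pos : 0 < h3 ^ 2 * P := mul_pos hh3 hP
  have ht2pos : 0 < h2 ^ 2 * P := mul_pos hh2 hP
  have ht1pos : 0 < h1 ^ 2 * P := mul_pos hh1 hP
  have ht32 : h3 ^ 2 * P ≤ h2 ^ 2 * P := mul_le_mul_of_nonneg_right hh23 hP.le
  have ht21 : h2 ^ 2 * P ≤ h1 ^ 2 * P := mul_le_mul_of_nonneg_right hh12 hP.le
  -- min facts
  have hm1 : R123c ≤ R12 - R21 := by rw [hR123c]; exact min_le_left _ _
  have hm2 : R123c ≤ R23 - R32 := by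
    rw [hR123c]; exact le_trans (min_le_right _ _) (min_le_left _ _)
  have hm3 : R123c ≤ R31 - R13 := by
    rw [hR123c]; exact le_trans (min_le_right _ _) (min_le_right _ _)
  have hm0 : 0 ≤ R123c := by
    rw [hR123c]; exact le_min (by linarith) (le_min (by linarith) (by linarith))
  have hcase : R123c = R12 - R21 ∨ R123c = R23 - R32 ∨ R123c = R31 - R13 := by
    rw [hR123c]
    rcases min_cases (R12-R21) (min (R23-R32) (R31-R13)) with ⟨h1',_⟩|⟨h1',_⟩
    · exact Or.inl h1'
    · rcases min_cases (R23-R32) (R31-R13) with ⟨h2',_⟩|⟨h2',_⟩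
      · exact Or.inr (Or.inl (h1'.trans h2'))
      · exact Or.inr (Or.inr (h1'.trans h2'))
  -- atoms
  obtain ⟨a, ha'⟩ : ∃ x : ℝ, x = (2:ℝ)^(2*R12) := ⟨_, rfl⟩
  obtain ⟨b, hb'⟩ : ∃ x : ℝ, x = (2:ℝ)^(2*R13) := ⟨_, rfl⟩
  obtain ⟨c', hc''⟩ : ∃ x : ℝ, x = (2:ℝ)^(2*R21) := ⟨_, rfl⟩
  obtain ⟨d, hd'⟩ : ∃ x : ℝ, x = (2:ℝ)^(2*R23) := ⟨_, rfl⟩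
  obtain ⟨e, he'⟩ : ∃ x : ℝ, x = (2:ℝ)^(2*R31) := ⟨_, rfl⟩
  obtain ⟨f, hf'⟩ : ∃ x : ℝ, x = (2:ℝ)^(2*R32) := ⟨_, rfl⟩
  obtain ⟨g, hg'⟩ : ∃ x : ℝ, x = (2:ℝ)^(2*R123c) := ⟨_, rfl⟩
  obtain ⟨D, hD'⟩ : ∃ x : ℝ, x = (2:ℝ)^(2 * (R31 - R13 - R123c)) := ⟨_, rfl⟩
  obtain ⟨F, hF'⟩ : ∃ x : ℝ, x = (2:ℝ)^(2 * (R23 - R32 - R123c)) := ⟨_, rfl⟩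
  obtain ⟨H, hH'⟩ : ∃ x : ℝ, x = (2:ℝ)^(2 * (R12 - R21 - R123c)) := ⟨_, rfl⟩
  have hapos : 0 < a := ha' ▸ Real.rpow_pos_of_pos two_pos _
  have hbpos : 0 < b := hb' ▸ Real.rpow_pos_of_pos two_pos _
  have hcpos : 0 < c' := hc'' ▸ Real.rpow_pos_of_pos two_pos _
  have hdpos : 0 < d := hd' ▸ Real.rpow_pos_of_pos two_pos _
  have hepos : 0 < e := he' ▸ Real.rpow_pos_of_pos two_pos _
  have hfpos : 0 < f := hf' ▸ Real.rpow_pos_of_pos two_pos _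
  have hgpos : 0 < g := hg' ▸ Real.rpow_pos_of_pos two_pos _
  have one_le_b : (1:ℝ) ≤ b := hb' ▸ one_le_two_rpow (by linarith)
  have one_le_c : (1:ℝ) ≤ c' := hc'' ▸ one_le_two_rpow (by linarith)
  have one_le_d : (1:ℝ) ≤ d := hd' ▸ one_le_two_rpow (by linarith)
  have one_le_e : (1:ℝ) ≤ e := he' ▸ one_le_two_rpow (by linarith)
  have one_le_f : (1:ℝ) ≤ f := hf' ▸ one_le_two_rpow (by linarith)
  have hb_le_e : b ≤ e := by
    rw [hb', he']; exact Real.rpow_le_rpow_of_exponent_le one_le_two (by linarith)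
  have hfg_le_d : f*g ≤ d := by
    rw [hf', hg', hd', ← hsplit]
    exact Real.rpow_le_rpow_of_exponent_le one_le_two (by linarith)
  -- product identities
  have hbgD : b*g*D = e := by rw [hb', hg', hD', he', ← hsplit, ← hsplit]; congr 1; ring
  have hfgF : f*g*F = d := by rw [hf', hg', hF', hd', ← hsplit, ← hsplit]; congr 1; ring
  have hcgH : c'*g*H = a := by rw [hc'', hg', hH', ha', ← hsplit, ← hsplit]; congr 1; ring
  -- exponential constraint forms
  have hk1 := key_log (h3^2*P) (R31+R32) 2 (by linarith) hG1
  rw [show (2*(R31+R32) + 2*(2:ℝ)) = 2*R31 + (2*R32 + 4) by ring, hsplit, hsplit,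
    show ((2:ℝ)^(4:ℝ)) = 16 by norm_num, ← he', ← hf'] at hk1
  have hk2 := key_log (h3^2*P) (R13+R23) 2 (by linarith) hG2
  rw [show (2*(R13+R23) + 2*(2:ℝ)) = 2*R13 + (2*R23 + 4) by ring, hsplit, hsplit,
    show ((2:ℝ)^(4:ℝ)) = 16 by norm_num, ← hb', ← hd'] at hk2
  have hk4 := key_log (h2^2*P + h3^2*P) (R13+R23+R12) 3 (by linarith) hG4
  rw [show (2*(R13+R23+R12) + 2*(3:ℝ)) = 2*R13 + (2*R23 + (2*R12 + 6)) by ring, hsplit, hsplit,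
    hsplit, show ((2:ℝ)^(6:ℝ)) = 64 by norm_num, ← hb', ← hd', ← ha'] at hk4
  have hk5 := key_log (h1^2*P + h2^2*P) (R12+R31+R32) 3 (by linarith) hG5
  rw [show (2*(R12+R31+R32) + 2*(3:ℝ)) = 2*R12 + (2*R31 + (2*R32 + 6)) by ring, hsplit, hsplit,
    hsplit, show ((2:ℝ)^(6:ℝ)) = 64 by norm_num, ← ha', ← he', ← hf'] at hk5
  have habsP : 0 ≤ (|h2| + |h3|) ^ 2 * P := mul_nonneg (sq_nonneg _) hP.le
  have hk7 := key_log ((|h2|+|h3|)^2*P) (R21+R31+R23) (7/2) (by linarith) hG7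
  rw [show (2*(R21+R31+R23) + 2*(7/2:ℝ)) = 2*R21 + (2*R31 + (2*R23 + 7)) by ring, hsplit, hsplit,
    hsplit, show ((2:ℝ)^(7:ℝ)) = 128 by norm_num, ← hc'', ← he', ← hd'] at hk7
  have habs : (|h2| + |h3|) ^ 2 * P ≤ 4 * (h2 ^ 2 * P) := by
    have := mul_le_mul_of_nonneg_right (abs_sq_le h2 h3 hh23) hP.le
    linarith only [this]
  have hE7 : c' * (e * (d * 128)) ≤ 1 + 4 * (h2 ^ 2 * P) := by linarith only [hk7, habs]
  have hbd1 : (1:ℝ) ≤ b * d := by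
    have := mul_le_mul one_le_b one_le_d zero_le_one (by linarith only [hbpos] : (0:ℝ) ≤ b)
    linarith only [this]
  have ht3_15 : 15 ≤ h3 ^ 2 * P := by linarith only [hk2, hbd1]
  -- coefficient identities
  have I1 : (2:ℝ) ^ (2 * R32 + 1) = 2 * f := by
    rw [hsplit, Real.rpow_one, ← hf']; ring
  have I2 : (2:ℝ) ^ (2 * R13 + 1) = 2 * b := by
    rw [hsplit, Real.rpow_one, ← hb']; ring
  have I3 : (2:ℝ) ^ (2 * R123c + 1) = 2 * g := by
    rw [hsplit, Real.rpow_one, ← hg']; ring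
  have I8 : (2:ℝ) ^ (2 * R21 + 1) = 2 * c' := by
    rw [hsplit, Real.rpow_one, ← hc'']; ring
  have I4 : (2:ℝ) ^ (2 * R32 + 2 * R13 + 2) = 4 * (b * f) := by
    rw [hsplit, hsplit, show ((2:ℝ)^(2:ℝ)) = 4 by norm_num, ← hf', ← hb']; ring
  have I5 : (2:ℝ) ^ (2 * R123c + 2 * R32 + 2 * R13 + 3) = 8 * (b * f * g) := by
    rw [hsplit, hsplit, hsplit, show ((2:ℝ)^(3:ℝ)) = 8 by norm_num, ← hg', ← hf', ← hb']; ring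
  have I7 : (2:ℝ) ^ (2 * R31 + 2 * R32 + 3) = 8 * (e * f) := by
    rw [hsplit, hsplit, show ((2:ℝ)^(3:ℝ)) = 8 by norm_num, ← he', ← hf']; ring
  have I9 : (2:ℝ) ^ (2 * R21 + 2 * R31 + 2 * R32 + 4) = 16 * (c' * e * f) := by
    rw [hsplit, hsplit, hsplit, show ((2:ℝ)^(4:ℝ)) = 16 by norm_num, ← hc'', ← he', ← hf']; ring
  have I10 : (2:ℝ) ^ (2 * R21 + 2 * R31 + 2 * R123c + 2 * R32 + 5) = 32 * (c' * e * f * g) := by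
    rw [hsplit, hsplit, hsplit, hsplit, show ((2:ℝ)^(5:ℝ)) = 32 by norm_num,
      ← hc'', ← he', ← hg', ← hf']; ring
  have I12 : (2:ℝ) ^ (2 * R23 + 2 * R21 + 2 * R31 + 5) = 32 * (c' * d * e) := by
    rw [hsplit, hsplit, hsplit, show ((2:ℝ)^(5:ℝ)) = 32 by norm_num, ← hd', ← hc'', ← he']; ring
  have ht3ne : h3 ^ 2 * P ≠ 0 := ne_of_gt ht3pos
  have ht2ne : h2 ^ 2 * P ≠ 0 := ne_of_gt ht2pos
  have ht1ne : h1 ^ 2 * P ≠ 0 := ne_of_gt ht1pos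
  have hh3ne : h3 ^ 2 ≠ 0 := ne_of_gt hh3
  have hh2ne : h2 ^ 2 ≠ 0 := ne_of_gt hh2
  have hh1ne : h1 ^ 2 ≠ 0 := ne_of_gt hh1
  have hPne : P ≠ 0 := ne_of_gt hP
  have hh3ne' : h3 ≠ 0 := by rintro rfl; simp at hh3ne
  have hh2ne' : h2 ≠ 0 := by rintro rfl; simp at hh2ne
  have hh1ne' : h1 ≠ 0 := by rintro rfl; simp at hh1ne
  -- alpha * t equalities
  have Ha32b : a32b * (h3 ^ 2 * P) = f - 1/2 := by
    rw [ha32b, I1]; field_simp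
  have Ha31b : a31b * (h3 ^ 2 * P) = 2 * (b * f) - f := by
    rw [ha31b, I1, I2]; field_simp
  have Ha31c : a31c * (h3 ^ 2 * P) = 4 * (b * f * g) - 2 * (b * f) := by
    rw [ha31c, I4, I3]; field_simp; ring
  have Ha31u : a31u * (h3 ^ 2 * P) = 8 * (e * f) - 8 * (b * f * g) := by
    rw [ha31u, I5, ← hD', div_mul_cancel₀ _ ht3ne]
    linear_combination (8 * f) * hbgD
  have Ha23b : a23b * (h2 ^ 2 * P) = f - 1/2 := by
    rw [ha23b, ha32b, I1]; field_simp
  have Hat23c : at23c * (h2 ^ 2 * P) = 4 * (b * f * g) - 2 * (b * f) := by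
    rw [hat23c, ha31c, I4, I3]; field_simp; ring
  have Ha21b : a21b * (h2 ^ 2 * P) = 8 * (c' * e * f) - 4 * (e * f) := by
    rw [ha21b, I7, I8]; field_simp; ring
  have Ha23c : a23c * (h2 ^ 2 * P) = 16 * (c' * e * f * g) - 8 * (c' * e * f) := by
    rw [ha23c, I9, I3]; field_simp; ring
  have Ha23u : a23u * (h2 ^ 2 * P) = 32 * (c' * d * e) - 32 * (c' * e * f * g) := by
    rw [ha23u, I10, ← hF', div_mul_cancel₀ _ ht2ne]
    linear_combination (32 * (c' * e)) * hfgF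
  have Ha13b : a13b * (h1 ^ 2 * P) = 2 * (b * f) - f := by
    rw [ha13b, ha31b, I1, I2]; field_simp
  have Ha12b : a12b * (h1 ^ 2 * P) = 8 * (c' * e * f) - 4 * (e * f) := by
    rw [ha12b, ha21b, I7, I8]; field_simp; ring
  have Ha12c : a12c * (h1 ^ 2 * P) = 16 * (c' * e * f * g) - 8 * (c' * e * f) := by
    rw [ha12c, ha23c, I9, I3]; field_simp; ring
  have Ha12u : a12u * (h1 ^ 2 * P) = 32 * (c' * d * e) * H - 32 * (c' * d * e) := by
    rw [ha12u, I12, ← hH', div_mul_cancel₀ _ ht1ne]; ring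
  -- key product bound via case analysis
  have hgne : g ≠ 0 := ne_of_gt hgpos
  have hprod : a * b * d * D * g = a * d * e := by rw [← hbgD]; ring
  have hkey : a * b * d * D * 64 ≤ 1 + (h1 ^ 2 * P + h2 ^ 2 * P) := by
    rcases hcase with h|h|h
    · have hcg : c' * g = a := by
        rw [hc'', hg', ha', ← hsplit]; congr 1; linarith only [h]
      have heq : a * b * d * D = c' * d * e := by
        apply mul_right_cancel₀ hgne
        rw [hprod, ← hcg]; ring
      rw [heq]; linarith only [hE7, ht21]
    · have hfg : f * g = d := by
        rw [hf', hg', hd', ← hsplit]; congr 1; linarith only [h]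
      have heq : a * b * d * D = a * e * f := by
        apply mul_right_cancel₀ hgne
        rw [hprod, ← hfg]; ring
      rw [heq]; linarith only [hk5]
    · have hD1 : D = 1 := by
        rw [hD', show 2 * (R31 - R13 - R123c) = (0:ℝ) from by linarith only [h], Real.rpow_zero]
      rw [hD1, mul_one]; linarith only [hk4, ht32, ht21]
  have hWeq : c' * d * e * H = a * b * d * D := by
    apply mul_right_cancel₀ hgne
    rw [hprod, ← hcgH]; ring
  -- monomial comparison helpers
  have hbf_nn : (0:ℝ) ≤ b * f := le_of_lt (mul_pos hbpos hfpos)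
  have hbfg_nn : (0:ℝ) ≤ b * f * g := le_of_lt (mul_pos (mul_pos hbpos hfpos) hgpos)
  have hcde_nn : (0:ℝ) ≤ c' * d * e := le_of_lt (mul_pos (mul_pos hcpos hdpos) hepos)
  have habd_nn : (0:ℝ) ≤ a * b * d := le_of_lt (mul_pos (mul_pos hapos hbpos) hdpos)
  have hcefg_nn : (0:ℝ) ≤ c' * e * f * g :=
    le_of_lt (mul_pos (mul_pos (mul_pos hcpos hepos) hfpos) hgpos)
  have m1 : f * 1 ≤ f * (4 * e) :=
    mul_le_mul_of_nonneg_left (by linarith only [one_le_e]) hfpos.le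
  have m2a : b ≤ 4 * (c' * e) := by
    have h1' : e * 1 ≤ e * (4 * c') :=
      mul_le_mul_of_nonneg_left (by linarith only [one_le_c]) hepos.le
    linarith only [h1', hb_le_e]
  have m2 : b * (f * g) ≤ 4 * (c' * e) * (f * g) :=
    mul_le_mul_of_nonneg_right m2a (le_of_lt (mul_pos hfpos hgpos))
  have m3 : b * f ≤ e * f := mul_le_mul_of_nonneg_right hb_le_e hfpos.le
  have m4 : c' * e * (f * g) ≤ c' * e * d :=
    mul_le_mul_of_nonneg_left hfg_le_d (le_of_lt (mul_pos hcpos hepos))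
  have m5 : (1:ℝ) ≤ e * f := by
    have := mul_le_mul one_le_e one_le_f zero_le_one (by linarith only [hepos] : (0:ℝ) ≤ e)
    linarith only [this]
  refine ⟨?_, ?_, ?_, ?_⟩
  · -- part 1
    have hle : (a32b + a31b + a31c + a31u) * (h3 ^ 2 * P) ≤ 1 * (h3 ^ 2 * P) := by
      have expand : (a32b + a31b + a31c + a31u) * (h3 ^ 2 * P)
          = (f - 1/2) + (2 * (b * f) - f) + (4 * (b * f * g) - 2 * (b * f))
            + (8 * (e * f) - 8 * (b * f * g)) := by
        rw [add_mul, add_mul, add_mul, Ha32b, Ha31b, Ha31c, Ha31u]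
      rw [expand]; linarith only [hk1, hbfg_nn, ht3pos]
    exact le_of_mul_le_mul_right hle ht3pos
  · -- part 2
    have hle : (a23b + at23c + a21b + a23c + a23u) * (h2 ^ 2 * P) ≤ 1 * (h2 ^ 2 * P) := by
      have expand : (a23b + at23c + a21b + a23c + a23u) * (h2 ^ 2 * P)
          = (f - 1/2) + (4 * (b * f * g) - 2 * (b * f)) + (8 * (c' * e * f) - 4 * (e * f))
            + (16 * (c' * e * f * g) - 8 * (c' * e * f))
            + (32 * (c' * d * e) - 32 * (c' * e * f * g)) := by
        rw [add_mul, add_mul, add_mul, add_mul, Ha23b, Hat23c, Ha21b, Ha23c, Ha23u]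
      rw [expand]
      linarith only [hE7, m1, m2, hbf_nn, hcefg_nn, ht2pos]
    exact le_of_mul_le_mul_right hle ht2pos
  · -- part 3
    have hle : (a13b + a12b + a12c + a12u) * (h1 ^ 2 * P) ≤ 1 * (h1 ^ 2 * P) := by
      have expand : (a13b + a12b + a12c + a12u) * (h1 ^ 2 * P)
          = (2 * (b * f) - f) + (8 * (c' * e * f) - 4 * (e * f))
            + (16 * (c' * e * f * g) - 8 * (c' * e * f))
            + (32 * (c' * d * e) * H - 32 * (c' * d * e)) := by
        rw [add_mul, add_mul, add_mul, Ha13b, Ha12b, Ha12c, Ha12u]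
      have hWle : c' * d * e * H * 64 ≤ 1 + (h1 ^ 2 * P + h2 ^ 2 * P) := by
        rw [hWeq]; exact hkey
      rw [expand]
      linarith only [hWle, m3, m4, m5, hfpos, hcde_nn, ht21]
    exact le_of_mul_le_mul_right hle ht1pos
  · -- part 4
    have J1 : (2:ℝ) ^ (2 * (R23 + R13)) = b * d := by
      rw [show (2 * (R23 + R13)) = 2*R23 + 2*R13 by ring, hsplit, ← hb', ← hd']; ring
    have J2 : (2:ℝ) ^ (2 * (R13 + R23)) = b * d := by
      rw [show (2 * (R13 + R23)) = 2*R13 + 2*R23 by ring, hsplit, ← hb', ← hd']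
    have J4 : (2:ℝ) ^ (2 * (R13 + R23 + R12)) = a * (b * d) := by
      rw [show (2 * (R13 + R23 + R12)) = 2*R13 + (2*R23 + 2*R12) by ring, hsplit, hsplit,
        ← hb', ← hd', ← ha']; ring
    rw [J1, J2, J4, ← ha', ← hD']
    have hT1 : (b * d - 1) / (h3 ^ 2 * P) ≤ 1/16 := by
      rw [div_le_iff₀ ht3pos]; linarith only [hk2]
    have hT2 : b * d * (a - 1) / (h2 ^ 2 * P) ≤ 1/15 := by
      rw [div_le_iff₀ ht2pos]
      have hexp : b * d * (a - 1) = b * (d * (a * 64)) / 64 - b * d := by ring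
      rw [hexp]
      linarith only [hk4, hbd1, ht32, ht3_15]
    have hT3 : a * (b * d) * (D - 1) / (h1 ^ 2 * P) ≤ 1/15 := by
      rw [div_le_iff₀ ht1pos]
      have hexp : a * (b * d) * (D - 1) = a * b * d * D * 64 / 64 - a * b * d := by ring
      rw [hexp]
      linarith only [hkey, habd_nn, ht32, ht21, ht3_15]
    linarith only [hT1, hT2, hT3]
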